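/- There is N ∈ ℕ such that the following holds. Let G be a finite abelian group (written additively) of order n ≥ N, let p be a real with n^{−1/600} ≤ p ≤ 1, and let X be a p-random subset of G. Then with probability at least 1 − 8/n³ the following event holds: for every Y ⊆ G, there are at most 8·n^{9/10} elements g ∈ G failing the property that for every choice of signs ε₀, ε₁, ε₂ ∈ {+1, −1}, the number of pairs (x, y) ∈ X × Y with ε₀·g + ε₁·x + ε₂·y = 0 lies between p·|Y| − n^{9/10} and p·|Y| + n^{9/10}. -/

import Mathlib

open scoped Classical

/-- The probability that a `p`-random subset of the finite type `G` (each element included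
independently with probability `p`) equals the finset `A`. -/
noncomputable def setProb (G : Type) [Fintype G] [DecidableEq G] (p : ℝ) (A : Finset G) : ℝ :=
  p ^ A.card * (1 - p) ^ (Fintype.card G - A.card)

namespace OneRandom

open Finset
set_option linter.unusedSectionVars false

variable {G : Type} [AddCommGroup G] [Fintype G] [DecidableEq G]

lemma setProb_nonneg {p : ℝ} (hp0 : 0 ≤ p) (hp1 : p ≤ 1) (X : Finset G) :
    0 ≤ setProb G p X :=
  mul_nonneg (pow_nonneg hp0 _) (pow_nonneg (by linarith) _)

lemma mgf (p : ℝ) (F : G → ℝ) :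
    ∑ X : Finset G, setProb G p X * ∏ g ∈ X, F g = ∏ g : G, (p * F g + (1 - p)) := by
  rw [Fintype.prod_add]
  refine Finset.sum_congr rfl fun X _ => ?_
  have h1 : ∏ g ∈ X, (p * F g) = p ^ X.card * ∏ g ∈ X, F g := by
    rw [Finset.prod_mul_distrib, Finset.prod_const]
  have h2 : ∏ g ∈ Xᶜ, (1 - p) = (1 - p) ^ (Fintype.card G - X.card) := by
    rw [Finset.prod_const, Finset.card_compl]
  rw [h1, h2, setProb]; ring

lemma sum_setProb (p : ℝ) : ∑ X : Finset G, setProb G p X = 1 := by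
  have := mgf (G := G) p (fun _ => 1)
  simpa using this

lemma exp_le_quad {x : ℝ} (h : |x| ≤ 1) : Real.exp x ≤ 1 + x + x ^ 2 := by
  have h2 := Real.exp_bound h (by norm_num : 0 < 2)
  have hs : ∑ i ∈ Finset.range 2, x ^ i / i.factorial = 1 + x := by
    simp [Finset.sum_range_succ]
  rw [hs] at h2
  have h3 := (abs_le.mp h2).2
  norm_num [Nat.factorial] at h3
  nlinarith [sq_abs x, sq_nonneg x]

lemma factor_bound {p u : ℝ} (hp0 : 0 ≤ p) (hp1 : p ≤ 1) (hu : |u| ≤ 1) :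
    p * Real.exp ((1 - p) * u) + (1 - p) * Real.exp (-(p * u)) ≤ Real.exp (u ^ 2) := by
  have hu1 : -1 ≤ u := by cases abs_le.mp hu; assumption
  have hu2 : u ≤ 1 := (abs_le.mp hu).2
  have h1 : |(1 - p) * u| ≤ 1 := by
    rw [abs_mul]
    calc |1 - p| * |u| ≤ 1 * 1 := by
          apply mul_le_mul _ hu (abs_nonneg _) zero_le_one
          rw [abs_le]; constructor <;> linarith
      _ = 1 := by ring
  have h2 : |(-(p * u))| ≤ 1 := by
    rw [abs_neg, abs_mul]
    calc |p| * |u| ≤ 1 * 1 := by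
          apply mul_le_mul _ hu (abs_nonneg _) zero_le_one
          rw [abs_le]; constructor <;> linarith
      _ = 1 := by ring
  have e1 := exp_le_quad h1
  have e2 := exp_le_quad h2
  have e3 : 1 + u ^ 2 ≤ Real.exp (u ^ 2) := by
    have := Real.add_one_le_exp (u ^ 2); linarith
  nlinarith [mul_le_mul_of_nonneg_left e1 hp0,
    mul_le_mul_of_nonneg_left e2 (by linarith : (0:ℝ) ≤ 1 - p),
    sq_nonneg u, mul_nonneg (mul_nonneg hp0 (by linarith : (0:ℝ) ≤ 1 - p)) (sq_nonneg u)]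


lemma mgf_exp (p : ℝ) (hp0 : 0 ≤ p) (hp1 : p ≤ 1) (a : G → ℝ) (ha : ∀ g, |a g| ≤ 1)
    {lam : ℝ} (hl0 : 0 ≤ lam) (hl1 : lam ≤ 1) :
    ∑ X : Finset G, setProb G p X *
        Real.exp (lam * ((∑ g ∈ X, a g) - p * ∑ g : G, a g))
      ≤ Real.exp ((Fintype.card G) * lam ^ 2) := by
  have step1 : ∀ X : Finset G,
      setProb G p X * Real.exp (lam * ((∑ g ∈ X, a g) - p * ∑ g : G, a g))
      = (setProb G p X * ∏ g ∈ X, Real.exp (lam * a g)) *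
          Real.exp (-(lam * p * ∑ g : G, a g)) := by
    intro X
    have h : lam * ((∑ g ∈ X, a g) - p * ∑ g : G, a g)
        = (∑ g ∈ X, lam * a g) + (-(lam * p * ∑ g : G, a g)) := by
      rw [← Finset.mul_sum]; ring
    rw [h, Real.exp_add, Real.exp_sum]; ring
  calc ∑ X : Finset G, setProb G p X *
        Real.exp (lam * ((∑ g ∈ X, a g) - p * ∑ g : G, a g))
      = (∑ X : Finset G, setProb G p X * ∏ g ∈ X, Real.exp (lam * a g)) *
          Real.exp (-(lam * p * ∑ g : G, a g)) := by
        rw [Finset.sum_mul]; exact Finset.sum_congr rfl fun X _ => step1 X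
    _ = (∏ g : G, (p * Real.exp (lam * a g) + (1 - p))) *
          ∏ g : G, Real.exp (-(lam * p * a g)) := by
        rw [mgf, ← Real.exp_sum]
        congr 2
        rw [Finset.mul_sum, ← Finset.sum_neg_distrib]
    _ = ∏ g : G, ((p * Real.exp (lam * a g) + (1 - p)) * Real.exp (-(lam * p * a g))) := by
        rw [Finset.prod_mul_distrib]
    _ ≤ ∏ g : G, Real.exp (lam ^ 2) := by
        apply Finset.prod_le_prod
        · intro g _
          have h1 : (0:ℝ) ≤ p * Real.exp (lam * a g) + (1 - p) := by
            have := Real.exp_pos (lam * a g)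
            nlinarith
          exact mul_nonneg h1 (Real.exp_pos _).le
        · intro g _
          have hu : |lam * a g| ≤ 1 := by
            rw [abs_mul, abs_of_nonneg hl0]
            calc lam * |a g| ≤ 1 * 1 := by
                  apply mul_le_mul hl1 (ha g) (abs_nonneg _) zero_le_one
              _ = 1 := by ring
          have key := factor_bound hp0 hp1 hu
          have expand : (p * Real.exp (lam * a g) + (1 - p)) * Real.exp (-(lam * p * a g))
              = p * Real.exp ((1 - p) * (lam * a g))
                + (1 - p) * Real.exp (-(p * (lam * a g))) := by
            rw [add_mul, mul_assoc, ← Real.exp_add]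
            ring_nf
          rw [expand]
          refine key.trans ?_
          apply Real.exp_le_exp.mpr
          calc (lam * a g) ^ 2 = lam ^ 2 * (a g) ^ 2 := by ring
            _ ≤ lam ^ 2 * 1 := by
                apply mul_le_mul_of_nonneg_left _ (sq_nonneg _)
                calc (a g) ^ 2 = |a g| ^ 2 := (sq_abs _).symm
                  _ ≤ 1 ^ 2 := by apply pow_le_pow_left₀ (abs_nonneg _) (ha g)
                  _ = 1 := one_pow 2
            _ = lam ^ 2 := mul_one _
    _ = Real.exp ((Fintype.card G) * lam ^ 2) := by
        rw [Finset.prod_const, ← Real.exp_nat_mul]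
        simp

lemma chernoff_one (p : ℝ) (hp0 : 0 ≤ p) (hp1 : p ≤ 1) (a : G → ℝ) (ha : ∀ g, |a g| ≤ 1)
    {lam t : ℝ} (hl0 : 0 ≤ lam) (hl1 : lam ≤ 1) :
    ∑ X : Finset G, (if t ≤ (∑ g ∈ X, a g) - p * ∑ g : G, a g then setProb G p X else 0)
      ≤ Real.exp ((Fintype.card G) * lam ^ 2 - lam * t) := by
  have h1 : ∀ X : Finset G,
      (if t ≤ (∑ g ∈ X, a g) - p * ∑ g : G, a g then setProb G p X else 0)
      ≤ setProb G p X *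
          Real.exp (lam * ((∑ g ∈ X, a g) - p * ∑ g : G, a g)) * Real.exp (-(lam * t)) := by
    intro X
    split_ifs with h
    · have : (1:ℝ) ≤ Real.exp (lam * ((∑ g ∈ X, a g) - p * ∑ g : G, a g)) *
          Real.exp (-(lam * t)) := by
        rw [← Real.exp_add]
        rw [show (1:ℝ) = Real.exp 0 from (Real.exp_zero).symm]
        apply Real.exp_le_exp.mpr
        have : lam * t ≤ lam * ((∑ g ∈ X, a g) - p * ∑ g : G, a g) :=
          mul_le_mul_of_nonneg_left h hl0
        linarith
      calc setProb G p X = setProb G p X * 1 := (mul_one _).symm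
        _ ≤ setProb G p X * (Real.exp (lam * ((∑ g ∈ X, a g) - p * ∑ g : G, a g)) *
              Real.exp (-(lam * t))) := by
            apply mul_le_mul_of_nonneg_left this (setProb_nonneg hp0 hp1 X)
        _ = _ := by ring
    · have := setProb_nonneg (G := G) hp0 hp1 X
      positivity
  calc ∑ X : Finset G, (if t ≤ (∑ g ∈ X, a g) - p * ∑ g : G, a g then setProb G p X else 0)
      ≤ ∑ X : Finset G, setProb G p X *
          Real.exp (lam * ((∑ g ∈ X, a g) - p * ∑ g : G, a g)) * Real.exp (-(lam * t)) :=
        Finset.sum_le_sum fun X _ => h1 X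
    _ = (∑ X : Finset G, setProb G p X *
          Real.exp (lam * ((∑ g ∈ X, a g) - p * ∑ g : G, a g))) * Real.exp (-(lam * t)) := by
        rw [Finset.sum_mul]
    _ ≤ Real.exp ((Fintype.card G) * lam ^ 2) * Real.exp (-(lam * t)) := by
        apply mul_le_mul_of_nonneg_right (mgf_exp p hp0 hp1 a ha hl0 hl1) (Real.exp_pos _).le
    _ = Real.exp ((Fintype.card G) * lam ^ 2 - lam * t) := by
        rw [← Real.exp_add]; ring_nf

lemma chernoff_abs (p : ℝ) (hp0 : 0 ≤ p) (hp1 : p ≤ 1) (a : G → ℝ) (ha : ∀ g, |a g| ≤ 1)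
    {lam t : ℝ} (hl0 : 0 ≤ lam) (hl1 : lam ≤ 1) :
    ∑ X : Finset G, (if t < |(∑ g ∈ X, a g) - p * ∑ g : G, a g| then setProb G p X else 0)
      ≤ 2 * Real.exp ((Fintype.card G) * lam ^ 2 - lam * t) := by
  have hneg := chernoff_one (G := G) p hp0 hp1 (fun g => -(a g))
    (fun g => by rw [abs_neg]; exact ha g) (lam := lam) (t := t) hl0 hl1
  beta_reduce at hneg
  have hpos := chernoff_one (G := G) p hp0 hp1 a ha (lam := lam) (t := t) hl0 hl1
  have hpt : ∀ X : Finset G,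
      (if t < |(∑ g ∈ X, a g) - p * ∑ g : G, a g| then setProb G p X else 0)
      ≤ (if t ≤ (∑ g ∈ X, a g) - p * ∑ g : G, a g then setProb G p X else 0)
        + (if t ≤ (∑ g ∈ X, -(a g)) - p * ∑ g : G, -(a g) then setProb G p X else 0) := by
    intro X
    have hw := setProb_nonneg (G := G) hp0 hp1 X
    have hsum : (∑ g ∈ X, -(a g)) - p * ∑ g : G, -(a g)
        = -((∑ g ∈ X, a g) - p * ∑ g : G, a g) := by
      simp [Finset.sum_neg_distrib, Finset.mul_sum]
      ring
    rw [hsum]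
    set d : ℝ := (∑ g ∈ X, a g) - p * ∑ g : G, a g with hd
    have e1 : 0 ≤ (if t ≤ d then setProb G p X else 0) := by split_ifs <;> simp [hw]
    have e2 : 0 ≤ (if t ≤ -d then setProb G p X else 0) := by split_ifs <;> simp [hw]
    by_cases h : t < |d|
    · rw [if_pos h]
      rcases le_or_gt t d with h1 | h1
      · rw [if_pos h1]; linarith
      · have h2 : t ≤ -d := by
          rcases abs_cases d with ⟨he, _⟩ | ⟨he, _⟩
          · rw [he] at h; linarith
          · rw [he] at h; linarith
        rw [if_pos h2]; linarith
    · rw [if_neg h]; linarith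
  calc ∑ X : Finset G, (if t < |(∑ g ∈ X, a g) - p * ∑ g : G, a g| then setProb G p X else 0)
      ≤ ∑ X : Finset G,
          ((if t ≤ (∑ g ∈ X, a g) - p * ∑ g : G, a g then setProb G p X else 0)
          + (if t ≤ (∑ g ∈ X, -(a g)) - p * ∑ g : G, -(a g) then setProb G p X else 0)) :=
        Finset.sum_le_sum fun X _ => hpt X
    _ = (∑ X : Finset G, (if t ≤ (∑ g ∈ X, a g) - p * ∑ g : G, a g then setProb G p X else 0))
        + ∑ X : Finset G,
            (if t ≤ (∑ g ∈ X, -(a g)) - p * ∑ g : G, -(a g) then setProb G p X else 0) :=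
        Finset.sum_add_distrib
    _ ≤ _ := by linarith


lemma mul_conj_eq (z : ℂ) : z * (starRingEnd ℂ) z = (‖z‖ : ℂ) ^ 2 := by
  rw [Complex.mul_conj]
  norm_cast
  rw [Complex.normSq_eq_norm_sq]

lemma parseval (f : G → ℂ) :
    ∑ χ : AddChar G ℂ, ‖∑ g : G, f g * χ g‖ ^ 2
      = (Fintype.card G : ℝ) * ∑ g : G, ‖f g‖ ^ 2 := by
  have key : ∑ χ : AddChar G ℂ, (∑ g : G, f g * χ g) * (starRingEnd ℂ) (∑ g : G, f g * χ g)
      = (Fintype.card G : ℂ) * ∑ g : G, f g * (starRingEnd ℂ) (f g) := by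
    have expand : ∀ χ : AddChar G ℂ,
        (∑ g : G, f g * χ g) * (starRingEnd ℂ) (∑ g : G, f g * χ g)
        = ∑ g : G, ∑ h : G, f g * (starRingEnd ℂ) (f h) * χ (g - h) := by
      intro χ
      rw [map_sum, Finset.sum_mul_sum]
      refine Finset.sum_congr rfl fun g _ => Finset.sum_congr rfl fun h _ => ?_
      rw [map_mul]
      have hc : χ g * (starRingEnd ℂ) (χ h) = χ (g - h) := by
        rw [← AddChar.map_neg_eq_conj, ← AddChar.map_add_eq_mul, sub_eq_add_neg]
      calc f g * χ g * ((starRingEnd ℂ) (f h) * (starRingEnd ℂ) (χ h))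
          = f g * (starRingEnd ℂ) (f h) * (χ g * (starRingEnd ℂ) (χ h)) := by ring
        _ = f g * (starRingEnd ℂ) (f h) * χ (g - h) := by rw [hc]
    simp_rw [expand]
    rw [Finset.sum_comm]
    refine Eq.trans (Finset.sum_congr rfl fun g _ => Finset.sum_comm) ?_
    have inner : ∀ g h : G, ∑ χ : AddChar G ℂ, f g * (starRingEnd ℂ) (f h) * χ (g - h)
        = if g = h then f g * (starRingEnd ℂ) (f h) * (Fintype.card G : ℂ) else 0 := by
      intro g h
      rw [← Finset.mul_sum, AddChar.sum_apply_eq_ite]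
      by_cases hgh : g = h <;> simp [hgh, sub_eq_zero]
    simp_rw [inner]
    simp only [Finset.sum_ite_eq, Finset.mem_univ, if_true]
    rw [← Finset.sum_mul, mul_comm]
  simp_rw [mul_conj_eq] at key
  exact_mod_cast key


lemma sign_sq {e : ℤ} (h : e = 1 ∨ e = -1) : e * e = 1 := by
  rcases h with rfl | rfl <;> norm_num

lemma sign_eq_iff {e₀ e₁ e₂ : ℤ} (h₁ : e₁ * e₁ = 1) (g x y : G) :
    e₀ • g + e₁ • x + e₂ • y = 0 ↔ x = (-(e₁ * e₀)) • g + (-(e₁ * e₂)) • y := by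
  have key : e₁ • (e₀ • g + e₁ • x + e₂ • y) = (e₁ * e₀) • g + x + (e₁ * e₂) • y := by
    rw [smul_add, smul_add, ← mul_smul, ← mul_smul, ← mul_smul, h₁, one_smul]
  constructor
  · intro h
    have h0 : (e₁ * e₀) • g + x + (e₁ * e₂) • y = 0 := by
      rw [← key, h, smul_zero]
    have h3 : x = -((e₁ * e₀) • g) + -((e₁ * e₂) • y)
        + ((e₁ * e₀) • g + x + (e₁ * e₂) • y) := by abel
    rw [h0, add_zero] at h3
    rw [h3, neg_smul, neg_smul]
  · intro h
    subst h
    have c1 : e₁ * -(e₁ * e₀) = -e₀ := by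
      rw [mul_neg, ← mul_assoc, h₁, one_mul]
    have c2 : e₁ * -(e₁ * e₂) = -e₂ := by
      rw [mul_neg, ← mul_assoc, h₁, one_mul]
    rw [smul_add, ← mul_smul, ← mul_smul, c1, c2, neg_smul, neg_smul]
    abel

lemma count_pairs {e₀ e₁ e₂ : ℤ} (h₁ : e₁ * e₁ = 1) (g : G) (X Y : Finset G) :
    ((X ×ˢ Y).filter (fun q : G × G => e₀ • g + e₁ • q.1 + e₂ • q.2 = 0)).card
      = (Y.filter (fun y => (-(e₁ * e₀)) • g + (-(e₁ * e₂)) • y ∈ X)).card := by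
  refine Finset.card_bij' (fun q _ => q.2)
      (fun y _ => ((-(e₁ * e₀)) • g + (-(e₁ * e₂)) • y, y)) ?_ ?_ ?_ ?_
  · intro q hq
    simp only [Finset.mem_filter, Finset.mem_product] at hq ⊢
    obtain ⟨⟨hx, hy⟩, he⟩ := hq
    rw [sign_eq_iff h₁] at he
    exact ⟨hy, by rw [← he]; exact hx⟩
  · intro y hy
    simp only [Finset.mem_filter, Finset.mem_product] at hy ⊢
    exact ⟨⟨hy.2, hy.1⟩, (sign_eq_iff h₁ _ _ _).mpr rfl⟩
  · intro q hq
    simp only [Finset.mem_filter, Finset.mem_product] at hq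
    rw [sign_eq_iff h₁] at hq
    exact Prod.ext hq.2.symm rfl
  · intro y hy
    rfl

lemma filter_card_sub (p : ℝ) (X Y : Finset G) (c : G) (σ : ℤ) :
    ((Y.filter (fun y => c + σ • y ∈ X)).card : ℝ) - p * Y.card
      = ∑ y ∈ Y, ((if c + σ • y ∈ X then (1:ℝ) else 0) - p) := by
  rw [Finset.sum_sub_distrib, Finset.sum_boole, Finset.sum_const, nsmul_eq_mul]
  ring


lemma hat_factor (f : G → ℂ) (Y : Finset G) (σ : ℤ) (χ : AddChar G ℂ) :
    ∑ c : G, (∑ y ∈ Y, f (c + σ • y)) * χ c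
      = (∑ u : G, f u * χ u) * ∑ y ∈ Y, χ (-(σ • y)) := by
  have h1 : ∀ c : G, (∑ y ∈ Y, f (c + σ • y)) * χ c = ∑ y ∈ Y, f (c + σ • y) * χ c := by
    intro c; rw [Finset.sum_mul]
  simp_rw [h1]
  rw [Finset.sum_comm]
  rw [Finset.mul_sum]
  refine Finset.sum_congr rfl fun y _ => ?_
  have h2 : ∑ c : G, f (c + σ • y) * χ c = ∑ u : G, f u * χ (u - σ • y) := by
    apply Fintype.sum_equiv (Equiv.addRight (σ • y))
    intro c
    simp
  rw [h2]
  have h3 : ∀ u : G, χ (u - σ • y) = χ u * χ (-(σ • y)) := by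
    intro u; rw [sub_eq_add_neg, AddChar.map_add_eq_mul]
  simp_rw [h3]
  rw [Finset.sum_mul]
  exact Finset.sum_congr rfl fun u _ => by ring

lemma parseval_indicator (S : Finset G) :
    ∑ χ : AddChar G ℂ, ‖∑ g ∈ S, χ g‖ ^ 2 = (Fintype.card G : ℝ) * S.card := by
  have h := parseval (G := G) (fun g => if g ∈ S then (1:ℂ) else 0)
  have h1 : ∀ χ : AddChar G ℂ,
      ∑ g : G, (if g ∈ S then (1:ℂ) else 0) * χ g = ∑ g ∈ S, χ g := by
    intro χ
    simp only [ite_mul, zero_mul, one_mul, Finset.sum_ite_mem, Finset.univ_inter]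
  simp_rw [h1] at h
  rw [h]
  congr 1
  have h2 : ∀ g : G, ‖if g ∈ S then (1:ℂ) else 0‖ ^ 2 = if g ∈ S then (1:ℝ) else 0 := by
    intro g; split_ifs <;> simp
  simp_rw [h2]
  simp [Finset.sum_ite_mem]

lemma parseval_smul (Y : Finset G) {τ : ℤ} (hτ : τ = 1 ∨ τ = -1) :
    ∑ χ : AddChar G ℂ, ‖∑ y ∈ Y, χ (τ • y)‖ ^ 2 = (Fintype.card G : ℝ) * Y.card := by
  have hinj : ∀ x ∈ Y, ∀ y ∈ Y, τ • x = τ • y → x = y := by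
    rcases hτ with rfl | rfl <;> intro x _ y _ h <;> simpa using h
  have him : ∀ χ : AddChar G ℂ, ∑ y ∈ Y, χ (τ • y) = ∑ g ∈ Y.image (τ • ·), χ g := by
    intro χ; rw [Finset.sum_image hinj]
  simp_rw [him]
  rw [parseval_indicator, Finset.card_image_of_injOn hinj]


lemma sum_fr (p : ℝ) (X : Finset G) :
    ∑ u : G, ((if u ∈ X then (1:ℝ) else 0) - p) = (X.card : ℝ) - p * Fintype.card G := by
  rw [Finset.sum_sub_distrib, Finset.sum_const, nsmul_eq_mul, Finset.card_univ]
  simp only [Finset.sum_ite_mem, Finset.univ_inter, Finset.sum_const, nsmul_eq_mul, mul_one]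
  ring

lemma indicator_hat_eq (p : ℝ) (X : Finset G) {χ : AddChar G ℂ} (hχ : χ ≠ 0) :
    ∑ u : G, (((if u ∈ X then (1:ℝ) else 0) - p : ℝ) : ℂ) * χ u = ∑ u ∈ X, χ u := by
  have h0 : ∀ u : G, (((if u ∈ X then (1:ℝ) else 0) - p : ℝ) : ℂ) * χ u
      = (if u ∈ X then (1:ℂ) else 0) * χ u - (p : ℂ) * χ u := by
    intro u; split_ifs <;> push_cast <;> ring
  simp_rw [h0]
  rw [Finset.sum_sub_distrib]
  have hz : ∑ u : G, χ u = 0 := AddChar.sum_eq_zero_iff_ne_zero.mpr hχ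
  simp only [ite_mul, zero_mul, one_mul, Finset.sum_ite_mem, Finset.univ_inter]
  rw [← Finset.mul_sum, hz, mul_zero, sub_zero]

lemma main_bound (p : ℝ) (X Y : Finset G) {σ : ℤ} (hσ : σ = 1 ∨ σ = -1) {T : ℝ}
    (hcard : |(X.card : ℝ) - p * Fintype.card G| ≤ T / 2)
    (hchar : ∀ χ : AddChar G ℂ, χ ≠ 0 → ‖∑ u ∈ X, χ u‖ ≤ T) :
    ∑ c : G, (∑ y ∈ Y, ((if c + σ • y ∈ X then (1:ℝ) else 0) - p)) ^ 2
      ≤ (5/4) * T ^ 2 * Fintype.card G := by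
  have hT : 0 ≤ T := by
    have := abs_nonneg ((X.card : ℝ) - p * Fintype.card G); linarith [hcard]
  rcases Nat.eq_zero_or_pos (Fintype.card G) with h0 | hpos
  · have : IsEmpty G := Fintype.card_eq_zero_iff.mp h0
    simp [h0]
  have hn : (0:ℝ) < Fintype.card G := by exact_mod_cast hpos
  set n : ℝ := (Fintype.card G : ℝ)
  set m : ℝ := (Y.card : ℝ)
  have hm : m ≤ n := by
    have := Finset.card_le_univ Y
    exact Nat.cast_le.mpr this
  have hm0 : 0 ≤ m := Nat.cast_nonneg _
  set fc : G → ℂ := fun u => (((if u ∈ X then (1:ℝ) else 0) - p : ℝ) : ℂ) with hfc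
  have hp := parseval (G := G)
    (fun c => ((∑ y ∈ Y, ((if c + σ • y ∈ X then (1:ℝ) else 0) - p) : ℝ) : ℂ))
  -- identify norms on RHS
  have hrhs : ∑ c : G, ‖((∑ y ∈ Y, ((if c + σ • y ∈ X then (1:ℝ) else 0) - p) : ℝ) : ℂ)‖ ^ 2
      = ∑ c : G, (∑ y ∈ Y, ((if c + σ • y ∈ X then (1:ℝ) else 0) - p)) ^ 2 := by
    refine Finset.sum_congr rfl fun c _ => ?_
    rw [Complex.norm_real, Real.norm_eq_abs, sq_abs]
  -- identify the Fourier side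
  have hhat : ∀ χ : AddChar G ℂ,
      ∑ c : G, ((∑ y ∈ Y, ((if c + σ • y ∈ X then (1:ℝ) else 0) - p) : ℝ) : ℂ) * χ c
      = (∑ u : G, fc u * χ u) * ∑ y ∈ Y, χ (-(σ • y)) := by
    intro χ
    rw [← hat_factor fc Y σ χ]
    refine Finset.sum_congr rfl fun c _ => ?_
    rw [Complex.ofReal_sum]
  have hsplit : ∀ χ : AddChar G ℂ,
      ‖(∑ u : G, fc u * χ u) * ∑ y ∈ Y, χ (-(σ • y))‖ ^ 2
      = ‖∑ u : G, fc u * χ u‖ ^ 2 * ‖∑ y ∈ Y, χ (-(σ • y))‖ ^ 2 := by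
    intro χ; rw [norm_mul, mul_pow]
  rw [hrhs] at hp
  simp_rw [hhat, hsplit] at hp
  -- now hp : ∑ χ, ‖A χ‖^2 * ‖W χ‖^2 = n * ∑ c, (...)^2
  set F : AddChar G ℂ → ℝ := fun χ => ‖∑ u : G, fc u * χ u‖ ^ 2 * ‖∑ y ∈ Y, χ (-(σ • y))‖ ^ 2
    with hF
  have hsum0 : F 0 + ∑ χ ∈ Finset.univ.erase (0 : AddChar G ℂ), F χ = ∑ χ : AddChar G ℂ, F χ :=
    Finset.add_sum_erase _ F (Finset.mem_univ _)
  -- bound F 0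
  have hA0 : ∑ u : G, fc u * (0 : AddChar G ℂ) u = (((X.card : ℝ) - p * n : ℝ) : ℂ) := by
    simp only [AddChar.zero_apply, mul_one, hfc]
    rw [← Complex.ofReal_sum, sum_fr]
  have hW0 : ∑ y ∈ Y, (0 : AddChar G ℂ) (-(σ • y)) = (m : ℂ) := by
    simp [AddChar.zero_apply, m]
  have hF0 : F 0 ≤ (T / 2) ^ 2 * m ^ 2 := by
    rw [hF]
    simp only [hA0, hW0]
    rw [Complex.norm_real, Real.norm_eq_abs, sq_abs, Complex.norm_real, Real.norm_eq_abs,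
      abs_of_nonneg hm0]
    have h1 : ((X.card : ℝ) - p * n) ^ 2 ≤ (T / 2) ^ 2 := by
      rw [← sq_abs]
      exact pow_le_pow_left₀ (abs_nonneg _) hcard 2
    exact mul_le_mul_of_nonneg_right h1 (sq_nonneg _)
  -- bound the nonzero characters
  have hWpar : ∑ χ : AddChar G ℂ, ‖∑ y ∈ Y, χ (-(σ • y))‖ ^ 2 = n * m := by
    have hτ : -σ = 1 ∨ -σ = -1 := by rcases hσ with rfl | rfl <;> simp
    have heq : ∀ χ : AddChar G ℂ, ∑ y ∈ Y, χ (-(σ • y)) = ∑ y ∈ Y, χ ((-σ) • y) := by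
      intro χ; refine Finset.sum_congr rfl fun y _ => ?_; rw [neg_smul]
    simp_rw [heq]
    exact parseval_smul Y hτ
  have hrest : ∑ χ ∈ Finset.univ.erase (0 : AddChar G ℂ), F χ ≤ T ^ 2 * (n * m) := by
    calc ∑ χ ∈ Finset.univ.erase (0 : AddChar G ℂ), F χ
        ≤ ∑ χ ∈ Finset.univ.erase (0 : AddChar G ℂ), T ^ 2 * ‖∑ y ∈ Y, χ (-(σ • y))‖ ^ 2 := by
          refine Finset.sum_le_sum fun χ hχ => ?_
          have hχ0 : χ ≠ 0 := (Finset.mem_erase.mp hχ).1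
          rw [hF]
          apply mul_le_mul_of_nonneg_right _ (sq_nonneg _)
          rw [indicator_hat_eq p X hχ0]
          exact pow_le_pow_left₀ (norm_nonneg _) (hchar χ hχ0) 2
      _ ≤ ∑ χ : AddChar G ℂ, T ^ 2 * ‖∑ y ∈ Y, χ (-(σ • y))‖ ^ 2 := by
          refine Finset.sum_le_sum_of_subset_of_nonneg (Finset.subset_univ _) fun χ _ _ => ?_
          positivity
      _ = T ^ 2 * (n * m) := by rw [← Finset.mul_sum, hWpar]
  -- combine
  have hkey : n * ∑ c : G, (∑ y ∈ Y, ((if c + σ • y ∈ X then (1:ℝ) else 0) - p)) ^ 2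
      ≤ (T / 2) ^ 2 * m ^ 2 + T ^ 2 * (n * m) := by
    rw [← hp, ← hsum0]
    exact add_le_add hF0 hrest
  have hfinal : (T / 2) ^ 2 * m ^ 2 + T ^ 2 * (n * m) ≤ n * ((5/4) * T ^ 2 * n) := by
    have h1 : m ^ 2 ≤ n ^ 2 := pow_le_pow_left₀ hm0 hm 2
    have h2 : T ^ 2 * (n * m) ≤ T ^ 2 * (n * n) := by nlinarith [mul_le_mul_of_nonneg_left hm (mul_nonneg (sq_nonneg T) hn.le)]
    nlinarith [mul_le_mul_of_nonneg_left h1 (by positivity : (0:ℝ) ≤ T ^ 2), h2]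
  have := hkey.trans hfinal
  exact le_of_mul_le_mul_left this hn

lemma bad_count {F : G → ℝ} {q B : ℝ} (hq : 0 < q) (h : ∑ c : G, (F c) ^ 2 ≤ B) :
    ((Finset.univ.filter fun c : G => q < |F c|).card : ℝ) ≤ B / q ^ 2 := by
  rw [le_div_iff₀ (by positivity)]
  have h1 : ((Finset.univ.filter fun c : G => q < |F c|).card : ℝ) * q ^ 2
      = ∑ _c ∈ Finset.univ.filter fun c : G => q < |F c|, q ^ 2 := by
    rw [Finset.sum_const, nsmul_eq_mul]
  rw [h1]
  refine le_trans (Finset.sum_le_sum fun c hc => ?_)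
    (le_trans (Finset.sum_le_sum_of_subset_of_nonneg (Finset.filter_subset _ _)
      fun c _ _ => sq_nonneg _) h)
  simp only [Finset.mem_filter] at hc
  calc q ^ 2 ≤ |F c| ^ 2 := pow_le_pow_left₀ hq.le hc.2.le 2
    _ = (F c) ^ 2 := sq_abs _


lemma deterministic (p : ℝ) (X : Finset G) {T r : ℝ} (hq : 0 < r)
    (hcard : |(X.card : ℝ) - p * Fintype.card G| ≤ T / 2)
    (hchar : ∀ χ : AddChar G ℂ, χ ≠ 0 → ‖∑ u ∈ X, χ u‖ ≤ T) (Y : Finset G) :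
    ((Finset.univ.filter (fun g : G =>
        ¬ ∀ e₀ e₁ e₂ : ℤ,
          (e₀ = 1 ∨ e₀ = -1) → (e₁ = 1 ∨ e₁ = -1) → (e₂ = 1 ∨ e₂ = -1) →
          |(((X ×ˢ Y).filter
              (fun q : G × G => e₀ • g + e₁ • q.1 + e₂ • q.2 = 0)).card : ℝ)
            - p * Y.card| ≤ r)).card : ℝ)
      ≤ 5 * T ^ 2 * (Fintype.card G : ℝ) / r ^ 2 := by
  classical
  set BadG : ℤ → ℤ → Finset G := fun σ τ =>
    Finset.univ.filter (fun g : G =>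
      r < |((Y.filter (fun y => τ • g + σ • y ∈ X)).card : ℝ) - p * Y.card|) with hBadG
  set BadC : ℤ → Finset G := fun σ =>
    Finset.univ.filter (fun c : G =>
      r < |((Y.filter (fun y => c + σ • y ∈ X)).card : ℝ) - p * Y.card|) with hBadC
  have hsub : (Finset.univ.filter (fun g : G =>
        ¬ ∀ e₀ e₁ e₂ : ℤ,
          (e₀ = 1 ∨ e₀ = -1) → (e₁ = 1 ∨ e₁ = -1) → (e₂ = 1 ∨ e₂ = -1) →
          |(((X ×ˢ Y).filter
              (fun q : G × G => e₀ • g + e₁ • q.1 + e₂ • q.2 = 0)).card : ℝ)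
            - p * Y.card| ≤ r))
      ⊆ BadG 1 1 ∪ BadG 1 (-1) ∪ BadG (-1) 1 ∪ BadG (-1) (-1) := by
    intro g hg
    simp only [Finset.mem_filter, Finset.mem_univ, true_and] at hg
    push_neg at hg
    obtain ⟨e₀, e₁, e₂, h₀, h₁, h₂, hgt⟩ := hg
    rw [count_pairs (sign_sq h₁) g X Y] at hgt
    have hmem : g ∈ BadG (-(e₁ * e₂)) (-(e₁ * e₀)) := by
      simp only [hBadG, Finset.mem_filter, Finset.mem_univ, true_and]
      exact hgt
    have hσ : -(e₁ * e₂) = 1 ∨ -(e₁ * e₂) = -1 := by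
      rcases h₁ with rfl | rfl <;> rcases h₂ with rfl | rfl <;> norm_num
    have hτ : -(e₁ * e₀) = 1 ∨ -(e₁ * e₀) = -1 := by
      rcases h₁ with rfl | rfl <;> rcases h₀ with rfl | rfl <;> norm_num
    simp only [Finset.mem_union]
    rcases hσ with hs | hs <;> rcases hτ with ht | ht <;> rw [hs, ht] at hmem <;> tauto
  have hBadGle : ∀ σ τ : ℤ, τ = 1 ∨ τ = -1 → σ = 1 ∨ σ = -1 →
      ((BadG σ τ).card : ℝ) ≤ (5/4) * T ^ 2 * (Fintype.card G : ℝ) / r ^ 2 := by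
    intro σ τ hτ hσ
    have hmap : ∀ g ∈ BadG σ τ, τ • g ∈ BadC σ := by
      intro g hg
      simp only [hBadG, Finset.mem_filter, Finset.mem_univ, true_and] at hg
      simp only [hBadC, Finset.mem_filter, Finset.mem_univ, true_and]
      exact hg
    have hinj : Set.InjOn (fun g : G => τ • g) (BadG σ τ) := by
      rcases hτ with rfl | rfl <;> intro a _ b _ h <;> simpa using h
    have h1 : (BadG σ τ).card ≤ (BadC σ).card :=
      Finset.card_le_card_of_injOn _ hmap hinj
    have h2 : ((BadC σ).card : ℝ) ≤ (5/4) * T ^ 2 * (Fintype.card G : ℝ) / r ^ 2 := by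
      have hfe : BadC σ = Finset.univ.filter (fun c : G =>
          r < |∑ y ∈ Y, ((if c + σ • y ∈ X then (1:ℝ) else 0) - p)|) := by
        apply Finset.filter_congr
        intro c _
        rw [← filter_card_sub p X Y c σ]
      rw [hfe]
      exact bad_count hq (main_bound p X Y hσ hcard hchar)
    exact le_trans (Nat.cast_le.mpr h1) h2
  have hunion : ((BadG 1 1 ∪ BadG 1 (-1) ∪ BadG (-1) 1 ∪ BadG (-1) (-1)).card : ℝ)
      ≤ ((BadG 1 1).card : ℝ) + (BadG 1 (-1)).card + (BadG (-1) 1).card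
        + (BadG (-1) (-1)).card := by
    have := (Finset.card_union_le (BadG 1 1 ∪ BadG 1 (-1) ∪ BadG (-1) 1) (BadG (-1) (-1)))
    have h2 := (Finset.card_union_le (BadG 1 1 ∪ BadG 1 (-1)) (BadG (-1) 1))
    have h3 := (Finset.card_union_le (BadG 1 1) (BadG 1 (-1)))
    push_cast
    have := Nat.cast_le (α := ℝ) |>.mpr this
    have h2 := Nat.cast_le (α := ℝ) |>.mpr h2
    have h3 := Nat.cast_le (α := ℝ) |>.mpr h3
    push_cast at this h2 h3
    linarith
  calc ((Finset.univ.filter _).card : ℝ)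
      ≤ ((BadG 1 1 ∪ BadG 1 (-1) ∪ BadG (-1) 1 ∪ BadG (-1) (-1)).card : ℝ) :=
        Nat.cast_le.mpr (Finset.card_le_card hsub)
    _ ≤ ((BadG 1 1).card : ℝ) + (BadG 1 (-1)).card + (BadG (-1) 1).card
        + (BadG (-1) (-1)).card := hunion
    _ ≤ (5/4) * T ^ 2 * (Fintype.card G : ℝ) / r ^ 2
        + (5/4) * T ^ 2 * (Fintype.card G : ℝ) / r ^ 2
        + (5/4) * T ^ 2 * (Fintype.card G : ℝ) / r ^ 2
        + (5/4) * T ^ 2 * (Fintype.card G : ℝ) / r ^ 2 := by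
        gcongr ?_ + ?_ + ?_ + ?_ <;>
          [exact hBadGle 1 1 (Or.inl rfl) (Or.inl rfl);
           exact hBadGle 1 (-1) (Or.inr rfl) (Or.inl rfl);
           exact hBadGle (-1) 1 (Or.inl rfl) (Or.inr rfl);
           exact hBadGle (-1) (-1) (Or.inr rfl) (Or.inr rfl)]
    _ = 5 * T ^ 2 * (Fintype.card G : ℝ) / r ^ 2 := by ring


lemma union_bound (p : ℝ) (hp0 : 0 ≤ p) (hp1 : p ≤ 1) (T : ℝ)
    {lam : ℝ} (hl0 : 0 ≤ lam) (hl1 : lam ≤ 1) :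
    ∑ X : Finset G, (if ¬ ((¬ (T/2 < |(X.card : ℝ) - p * Fintype.card G|))
        ∧ ∀ χ : AddChar G ℂ, χ ≠ 0 → ‖∑ g ∈ X, χ g‖ ≤ T)
      then setProb G p X else 0)
      ≤ (2 + 4 * (Fintype.card G : ℝ))
          * Real.exp ((Fintype.card G) * lam ^ 2 - lam * (T/2)) := by
  classical
  set w : Finset G → ℝ := fun X => setProb G p X with hw
  have hwnn : ∀ X, 0 ≤ w X := fun X => setProb_nonneg hp0 hp1 X
  set ee : ℝ := Real.exp ((Fintype.card G) * lam ^ 2 - lam * (T/2)) with hee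
  -- Chernoff for the cardinality form
  have hcard : ∑ X : Finset G, (if T/2 < |(X.card : ℝ) - p * Fintype.card G|
      then w X else 0) ≤ 2 * ee := by
    have h := chernoff_abs (G := G) p hp0 hp1 (fun _ => (1:ℝ))
      (fun _ => by norm_num) (lam := lam) (t := T/2) hl0 hl1
    simp only [Finset.sum_const, nsmul_eq_mul, mul_one, Finset.card_univ] at h
    exact h
  -- Chernoff for each nontrivial character (real and imaginary parts)
  have hchar : ∀ χ : AddChar G ℂ, χ ≠ 0 →
      (∑ X : Finset G, (if T/2 < |(∑ g ∈ X, χ g).re| then w X else 0))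
      + (∑ X : Finset G, (if T/2 < |(∑ g ∈ X, χ g).im| then w X else 0)) ≤ 4 * ee := by
    intro χ hχ
    have hz : ∑ g : G, χ g = 0 := AddChar.sum_eq_zero_iff_ne_zero.mpr hχ
    have hnorm : ∀ g : G, ‖χ g‖ = 1 := fun g => AddChar.norm_apply χ g
    have hre : ∑ g : G, (χ g).re = 0 := by
      rw [← Complex.re_sum, hz, Complex.zero_re]
    have him : ∑ g : G, (χ g).im = 0 := by
      rw [← Complex.im_sum, hz, Complex.zero_im]
    have hR := chernoff_abs (G := G) p hp0 hp1 (fun g => (χ g).re)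
      (fun g => by
        calc |(χ g).re| ≤ ‖χ g‖ := Complex.abs_re_le_norm _
          _ = 1 := by rw [hnorm g])
      (lam := lam) (t := T/2) hl0 hl1
    have hI := chernoff_abs (G := G) p hp0 hp1 (fun g => (χ g).im)
      (fun g => by
        calc |(χ g).im| ≤ ‖χ g‖ := Complex.abs_im_le_norm _
          _ = 1 := by rw [hnorm g])
      (lam := lam) (t := T/2) hl0 hl1
    beta_reduce at hR hI
    rw [hre, mul_zero] at hR
    rw [him, mul_zero] at hI
    simp only [sub_zero] at hR hI
    have hRe : ∀ X : Finset G, ∑ g ∈ X, (χ g).re = (∑ g ∈ X, χ g).re := by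
      intro X; rw [Complex.re_sum]
    have hIm : ∀ X : Finset G, ∑ g ∈ X, (χ g).im = (∑ g ∈ X, χ g).im := by
      intro X; rw [Complex.im_sum]
    simp_rw [hRe] at hR
    simp_rw [hIm] at hI
    have : 2 * ee + 2 * ee = 4 * ee := by ring
    rw [← this]
    exact add_le_add hR hI
  -- pointwise union bound
  have hpt : ∀ X : Finset G,
      (if ¬ ((¬ (T/2 < |(X.card : ℝ) - p * Fintype.card G|))
          ∧ ∀ χ : AddChar G ℂ, χ ≠ 0 → ‖∑ g ∈ X, χ g‖ ≤ T) then w X else 0)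
      ≤ (if T/2 < |(X.card : ℝ) - p * Fintype.card G| then w X else 0)
        + ∑ χ ∈ Finset.univ.erase (0 : AddChar G ℂ),
            ((if T/2 < |(∑ g ∈ X, χ g).re| then w X else 0)
              + (if T/2 < |(∑ g ∈ X, χ g).im| then w X else 0)) := by
    intro X
    have hterm0 : (0:ℝ) ≤ (if T/2 < |(X.card : ℝ) - p * Fintype.card G| then w X else 0) := by
      split_ifs <;> simp [hwnn]
    have htermχ : ∀ χ ∈ Finset.univ.erase (0 : AddChar G ℂ),
        (0:ℝ) ≤ (if T/2 < |(∑ g ∈ X, χ g).re| then w X else 0)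
          + (if T/2 < |(∑ g ∈ X, χ g).im| then w X else 0) := by
      intro χ _
      have h1 : (0:ℝ) ≤ (if T/2 < |(∑ g ∈ X, χ g).re| then w X else 0) := by
        split_ifs <;> simp [hwnn]
      have h2 : (0:ℝ) ≤ (if T/2 < |(∑ g ∈ X, χ g).im| then w X else 0) := by
        split_ifs <;> simp [hwnn]
      linarith
    have hsumnn := Finset.sum_nonneg htermχ
    by_cases hB : (¬ (T/2 < |(X.card : ℝ) - p * Fintype.card G|))
        ∧ ∀ χ : AddChar G ℂ, χ ≠ 0 → ‖∑ g ∈ X, χ g‖ ≤ T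
    · rw [if_neg (not_not_intro hB)]
      linarith
    · rw [if_pos hB]
      rw [not_and_or] at hB
      rcases hB with hB | hB
      · rw [not_not] at hB
        rw [if_pos hB]
        linarith
      · push_neg at hB
        obtain ⟨χ, hχ0, hχ⟩ := hB
        have hri : T/2 < |(∑ g ∈ X, χ g).re| ∨ T/2 < |(∑ g ∈ X, χ g).im| := by
          by_contra hc
          push_neg at hc
          have := Complex.norm_le_abs_re_add_abs_im (∑ g ∈ X, χ g)
          have : ‖∑ g ∈ X, χ g‖ ≤ T := by linarith [hc.1, hc.2]
          linarith
        have hkey : w X ≤ (if T/2 < |(∑ g ∈ X, χ g).re| then w X else 0)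
            + (if T/2 < |(∑ g ∈ X, χ g).im| then w X else 0) := by
          rcases hri with h | h
          · rw [if_pos h]
            have : (0:ℝ) ≤ (if T/2 < |(∑ g ∈ X, χ g).im| then w X else 0) := by
              split_ifs <;> simp [hwnn]
            linarith
          · rw [if_pos h]
            have : (0:ℝ) ≤ (if T/2 < |(∑ g ∈ X, χ g).re| then w X else 0) := by
              split_ifs <;> simp [hwnn]
            linarith
        have hsingle := Finset.single_le_sum htermχ
          (Finset.mem_erase.mpr ⟨hχ0, Finset.mem_univ χ⟩)
        linarith
  -- sum it all up
  calc ∑ X : Finset G, (if ¬ ((¬ (T/2 < |(X.card : ℝ) - p * Fintype.card G|))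
        ∧ ∀ χ : AddChar G ℂ, χ ≠ 0 → ‖∑ g ∈ X, χ g‖ ≤ T) then w X else 0)
      ≤ ∑ X : Finset G,
          ((if T/2 < |(X.card : ℝ) - p * Fintype.card G| then w X else 0)
          + ∑ χ ∈ Finset.univ.erase (0 : AddChar G ℂ),
              ((if T/2 < |(∑ g ∈ X, χ g).re| then w X else 0)
                + (if T/2 < |(∑ g ∈ X, χ g).im| then w X else 0))) :=
        Finset.sum_le_sum fun X _ => hpt X
    _ = (∑ X : Finset G, (if T/2 < |(X.card : ℝ) - p * Fintype.card G| then w X else 0))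
        + ∑ χ ∈ Finset.univ.erase (0 : AddChar G ℂ), ∑ X : Finset G,
            ((if T/2 < |(∑ g ∈ X, χ g).re| then w X else 0)
              + (if T/2 < |(∑ g ∈ X, χ g).im| then w X else 0)) := by
        rw [Finset.sum_add_distrib]
        congr 1
        rw [Finset.sum_comm]
    _ ≤ 2 * ee + ∑ χ ∈ Finset.univ.erase (0 : AddChar G ℂ), (4 * ee) := by
        refine add_le_add hcard (Finset.sum_le_sum fun χ hχ => ?_)
        have h := hchar χ (Finset.mem_erase.mp hχ).1
        rw [← Finset.sum_add_distrib] at h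
        exact h
    _ ≤ 2 * ee + 4 * (Fintype.card G : ℝ) * ee := by
        rw [Finset.sum_const, nsmul_eq_mul]
        have hcardle : ((Finset.univ.erase (0 : AddChar G ℂ)).card : ℝ)
            ≤ (Fintype.card G : ℝ) := by
          have h1 : (Finset.univ.erase (0 : AddChar G ℂ)).card ≤ Fintype.card (AddChar G ℂ) := by
            calc (Finset.univ.erase (0 : AddChar G ℂ)).card
                ≤ Finset.univ.card := Finset.card_le_card (Finset.erase_subset _ _)
              _ = Fintype.card (AddChar G ℂ) := Finset.card_univ
          rw [AddChar.card_eq] at h1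
          exact_mod_cast h1
        have hee0 : 0 ≤ ee := (Real.exp_pos _).le
        nlinarith [mul_le_mul_of_nonneg_right hcardle (by positivity : (0:ℝ) ≤ 4 * ee)]
    _ = (2 + 4 * (Fintype.card G : ℝ)) * ee := by ring


lemma exp_ge_pow6 {x : ℝ} (hx : 0 ≤ x) : (x / 6) ^ 6 ≤ Real.exp x := by
  have h2 : x / 6 + 1 ≤ Real.exp (x / 6) := Real.add_one_le_exp _
  calc (x / 6) ^ 6 ≤ (Real.exp (x / 6)) ^ 6 :=
        pow_le_pow_left₀ (by positivity) (by linarith) 6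
    _ = Real.exp x := by rw [← Real.exp_nat_mul]; congr 1; push_cast; ring

end OneRandom

/-- Near-regularity from one random set: with probability at least `1 - 8/n³`, for every
`Y ⊆ G` all but at most `8·n^(9/10)` elements `g ∈ G` satisfy that, for every choice of
signs, the number of pairs `(x, y) ∈ X × Y` with `±g ± x ± y = 0` is `p·|Y| ± n^(9/10)`. -/
theorem one_random_set_nearly_regular :
    ∃ N : ℕ,
      ∀ (G : Type) [AddCommGroup G] [Fintype G] [DecidableEq G], ∀ p : ℝ,
      N ≤ Fintype.card G →
      (Fintype.card G : ℝ) ^ (-(1 : ℝ) / 600) ≤ p → p ≤ 1 →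
      1 - 8 / (Fintype.card G : ℝ) ^ 3 ≤ ∑ X : Finset G,
        (if (∀ Y : Finset G,
              ((Finset.univ.filter (fun g : G =>
                  ¬ ∀ e₀ e₁ e₂ : ℤ,
                    (e₀ = 1 ∨ e₀ = -1) → (e₁ = 1 ∨ e₁ = -1) → (e₂ = 1 ∨ e₂ = -1) →
                    |(((X ×ˢ Y).filter
                        (fun q : G × G => e₀ • g + e₁ • q.1 + e₂ • q.2 = 0)).card : ℝ)
                      - p * Y.card|
                      ≤ (Fintype.card G : ℝ) ^ ((9 : ℝ) / 10))).card : ℝ)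
                ≤ 8 * (Fintype.card G : ℝ) ^ ((9 : ℝ) / 10))
        then setProb G p X else 0) := by
  classical
  refine ⟨96 ^ 30, ?_⟩
  intro G _ _ _ p hN hpl hpu
  have hn96 : ((96:ℝ) ^ 30) ≤ (Fintype.card G : ℝ) := by exact_mod_cast hN
  have hn1 : (1:ℝ) ≤ (Fintype.card G : ℝ) := le_trans (by norm_num) hn96
  have hn0 : (0:ℝ) < (Fintype.card G : ℝ) := lt_of_lt_of_le one_pos hn1
  have hp0 : 0 ≤ p := le_trans (Real.rpow_pos_of_pos hn0 _).le hpl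
  have hT0 : (0:ℝ) < (Fintype.card G : ℝ) ^ ((17:ℝ)/20) := Real.rpow_pos_of_pos hn0 _
  have hl0 : (0:ℝ) ≤ ((Fintype.card G : ℝ) ^ ((17:ℝ)/20) / (4 * (Fintype.card G : ℝ))) := by positivity
  have hTn : (Fintype.card G : ℝ) ^ ((17:ℝ)/20) ≤ (Fintype.card G : ℝ) := by
    calc (Fintype.card G : ℝ) ^ ((17:ℝ)/20) ≤ (Fintype.card G : ℝ) ^ (1:ℝ) := Real.rpow_le_rpow_of_exponent_le hn1 (by norm_num)
      _ = (Fintype.card G : ℝ) := Real.rpow_one _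
  have hl1 : ((Fintype.card G : ℝ) ^ ((17:ℝ)/20) / (4 * (Fintype.card G : ℝ))) ≤ 1 := by
    rw [div_le_one (by positivity)]
    linarith
  have hT2 : ((Fintype.card G : ℝ) ^ ((17:ℝ)/20)) ^ 2 = (Fintype.card G : ℝ) ^ ((17:ℝ)/10) := by
    rw [← Real.rpow_natCast ((Fintype.card G : ℝ) ^ ((17:ℝ)/20)) 2, ← Real.rpow_mul hn0.le]
    norm_num
  have hexp_eq : (Fintype.card G : ℝ) * ((Fintype.card G : ℝ) ^ ((17:ℝ)/20) / (4 * (Fintype.card G : ℝ))) ^ 2 - ((Fintype.card G : ℝ) ^ ((17:ℝ)/20) / (4 * (Fintype.card G : ℝ))) * ((Fintype.card G : ℝ) ^ ((17:ℝ)/20) / 2) = -((Fintype.card G : ℝ) ^ ((7:ℝ)/10) / 16) := by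
    have h1 : (Fintype.card G : ℝ) * ((Fintype.card G : ℝ) ^ ((17:ℝ)/20) / (4 * (Fintype.card G : ℝ))) ^ 2 - ((Fintype.card G : ℝ) ^ ((17:ℝ)/20) / (4 * (Fintype.card G : ℝ))) * ((Fintype.card G : ℝ) ^ ((17:ℝ)/20) / 2)
        = -(((Fintype.card G : ℝ) ^ ((17:ℝ)/20)) ^ 2 / (16 * (Fintype.card G : ℝ))) := by
      field_simp
      ring
    rw [h1, hT2]
    have h2 : (Fintype.card G : ℝ) ^ ((7:ℝ)/10) * (Fintype.card G : ℝ) ^ (1:ℝ) = (Fintype.card G : ℝ) ^ ((17:ℝ)/10) := by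
      rw [← Real.rpow_add hn0]; norm_num
    rw [Real.rpow_one] at h2
    rw [← h2]
    field_simp
  have hx0 : (0:ℝ) ≤ ((Fintype.card G : ℝ) ^ ((7:ℝ)/10) / 16) := by positivity
  have hkeynum : (Fintype.card G : ℝ) ^ 4 ≤ Real.exp ((Fintype.card G : ℝ) ^ ((7:ℝ)/10) / 16) := by
    have h := OneRandom.exp_ge_pow6 hx0
    have h1 : ((Fintype.card G : ℝ) ^ ((7:ℝ)/10) / 16) / 6 = (Fintype.card G : ℝ) ^ ((7:ℝ)/10) / 96 := by ring
    have h2 : (((Fintype.card G : ℝ) ^ ((7:ℝ)/10) / 16) / 6) ^ 6 = (Fintype.card G : ℝ) ^ ((21:ℝ)/5) / 96 ^ 6 := by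
      rw [h1, div_pow, ← Real.rpow_natCast ((Fintype.card G : ℝ) ^ ((7:ℝ)/10)) 6, ← Real.rpow_mul hn0.le]
      norm_num
    have h3 : (Fintype.card G : ℝ) ^ ((21:ℝ)/5) = (Fintype.card G : ℝ) ^ (4:ℕ) * (Fintype.card G : ℝ) ^ ((1:ℝ)/5) := by
      rw [← Real.rpow_natCast (Fintype.card G : ℝ) 4, ← Real.rpow_add hn0]
      norm_num
    have h4 : (96:ℝ) ^ 6 ≤ (Fintype.card G : ℝ) ^ ((1:ℝ)/5) := by
      have h5 : ((96:ℝ) ^ 30) ^ ((1:ℝ)/5) ≤ (Fintype.card G : ℝ) ^ ((1:ℝ)/5) :=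
        Real.rpow_le_rpow (by positivity) hn96 (by norm_num)
      have h6 : ((96:ℝ) ^ 30) ^ ((1:ℝ)/5) = (96:ℝ) ^ 6 := by
        rw [← Real.rpow_natCast (96:ℝ) 30, ← Real.rpow_mul (by norm_num : (0:ℝ) ≤ 96)]
        norm_num
      rw [h6] at h5
      exact h5
    have h7 : (Fintype.card G : ℝ) ^ (4:ℕ) ≤ (Fintype.card G : ℝ) ^ ((21:ℝ)/5) / 96 ^ 6 := by
      rw [h3, le_div_iff₀ (by positivity : (0:ℝ) < 96 ^ 6)]
      exact mul_le_mul_of_nonneg_left h4 (by positivity)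
    calc (Fintype.card G : ℝ) ^ 4 ≤ (Fintype.card G : ℝ) ^ ((21:ℝ)/5) / 96 ^ 6 := h7
      _ = (((Fintype.card G : ℝ) ^ ((7:ℝ)/10) / 16) / 6) ^ 6 := h2.symm
      _ ≤ Real.exp ((Fintype.card G : ℝ) ^ ((7:ℝ)/10) / 16) := h
  -- probability of the bad event
  have hub := OneRandom.union_bound (G := G) p hp0 hpu ((Fintype.card G : ℝ) ^ ((17:ℝ)/20)) hl0 hl1
  rw [hexp_eq] at hub
  have hprob : (2 + 4 * (Fintype.card G : ℝ)) * Real.exp (-((Fintype.card G : ℝ) ^ ((7:ℝ)/10) / 16)) ≤ 8 / (Fintype.card G : ℝ) ^ 3 := by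
    have h6n : 2 + 4 * (Fintype.card G : ℝ) ≤ 6 * (Fintype.card G : ℝ) := by linarith
    have hexpneg : Real.exp (-((Fintype.card G : ℝ) ^ ((7:ℝ)/10) / 16)) ≤ 1 / (Fintype.card G : ℝ) ^ 4 := by
      rw [Real.exp_neg, one_div]
      exact inv_anti₀ (by positivity) hkeynum
    calc (2 + 4 * (Fintype.card G : ℝ)) * Real.exp (-((Fintype.card G : ℝ) ^ ((7:ℝ)/10) / 16))
        ≤ (6 * (Fintype.card G : ℝ)) * (1 / (Fintype.card G : ℝ) ^ 4) := by
          apply mul_le_mul h6n hexpneg (Real.exp_pos _).le (by positivity)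
      _ = 6 / (Fintype.card G : ℝ) ^ 3 := by field_simp
      _ ≤ 8 / (Fintype.card G : ℝ) ^ 3 := by gcongr <;> norm_num
  have hub2 : (∑ X : Finset G, (if ¬ ((¬ ((Fintype.card G : ℝ) ^ ((17:ℝ)/20) / 2 < |(X.card : ℝ) - p * Fintype.card G|))
        ∧ ∀ χ : AddChar G ℂ, χ ≠ 0 → ‖∑ g ∈ X, χ g‖ ≤ (Fintype.card G : ℝ) ^ ((17:ℝ)/20))
      then setProb G p X else 0)) ≤ 8 / (Fintype.card G : ℝ) ^ 3 := le_trans hub hprob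
  -- the deterministic bound
  have hr0 : (0:ℝ) < (Fintype.card G : ℝ) ^ ((9:ℝ)/10) := Real.rpow_pos_of_pos hn0 _
  have hdetnum : 5 * ((Fintype.card G : ℝ) ^ ((17:ℝ)/20)) ^ 2 * (Fintype.card G : ℝ) / ((Fintype.card G : ℝ) ^ ((9:ℝ)/10)) ^ 2 ≤ 8 * (Fintype.card G : ℝ) ^ ((9:ℝ)/10) := by
    have hr2 : ((Fintype.card G : ℝ) ^ ((9:ℝ)/10)) ^ 2 = (Fintype.card G : ℝ) ^ ((9:ℝ)/5) := by
      rw [← Real.rpow_natCast ((Fintype.card G : ℝ) ^ ((9:ℝ)/10)) 2, ← Real.rpow_mul hn0.le]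
      norm_num
    have hnum : ((Fintype.card G : ℝ) ^ ((17:ℝ)/20)) ^ 2 * (Fintype.card G : ℝ) = (Fintype.card G : ℝ) ^ ((27:ℝ)/10) := by
      rw [hT2]
      have h2 : (Fintype.card G : ℝ) ^ ((17:ℝ)/10) * (Fintype.card G : ℝ) ^ (1:ℝ) = (Fintype.card G : ℝ) ^ ((27:ℝ)/10) := by
        rw [← Real.rpow_add hn0]; norm_num
      rw [Real.rpow_one] at h2
      exact h2
    have hdiv : (Fintype.card G : ℝ) ^ ((27:ℝ)/10) / (Fintype.card G : ℝ) ^ ((9:ℝ)/5) = (Fintype.card G : ℝ) ^ ((9:ℝ)/10) := by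
      rw [← Real.rpow_sub hn0]; norm_num
    calc 5 * ((Fintype.card G : ℝ) ^ ((17:ℝ)/20)) ^ 2 * (Fintype.card G : ℝ) / ((Fintype.card G : ℝ) ^ ((9:ℝ)/10)) ^ 2 = 5 * (((Fintype.card G : ℝ) ^ ((17:ℝ)/20)) ^ 2 * (Fintype.card G : ℝ) / ((Fintype.card G : ℝ) ^ ((9:ℝ)/10)) ^ 2) := by ring
      _ = 5 * (Fintype.card G : ℝ) ^ ((9:ℝ)/10) := by rw [hnum, hr2, hdiv]
      _ ≤ 8 * (Fintype.card G : ℝ) ^ ((9:ℝ)/10) := by nlinarith [hr0]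
  have himp : ∀ X : Finset G,
      ((¬ ((Fintype.card G : ℝ) ^ ((17:ℝ)/20) / 2 < |(X.card : ℝ) - p * Fintype.card G|))
        ∧ ∀ χ : AddChar G ℂ, χ ≠ 0 → ‖∑ g ∈ X, χ g‖ ≤ (Fintype.card G : ℝ) ^ ((17:ℝ)/20)) →
      (∀ Y : Finset G,
        ((Finset.univ.filter (fun g : G =>
            ¬ ∀ e₀ e₁ e₂ : ℤ,
              (e₀ = 1 ∨ e₀ = -1) → (e₁ = 1 ∨ e₁ = -1) → (e₂ = 1 ∨ e₂ = -1) →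
              |(((X ×ˢ Y).filter
                  (fun q : G × G => e₀ • g + e₁ • q.1 + e₂ • q.2 = 0)).card : ℝ)
                - p * Y.card|
                ≤ (Fintype.card G : ℝ) ^ ((9 : ℝ) / 10))).card : ℝ)
          ≤ 8 * (Fintype.card G : ℝ) ^ ((9 : ℝ) / 10)) := by
    intro X hB Y
    have hd := OneRandom.deterministic (G := G) p X (r := (Fintype.card G : ℝ) ^ ((9:ℝ)/10)) hr0
      (not_lt.mp hB.1) hB.2 Y
    exact hd.trans hdetnum
  -- put everything together
  have hwnn : ∀ X : Finset G, 0 ≤ setProb G p X :=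
    fun X => OneRandom.setProb_nonneg hp0 hpu X
  have hsum1 : (∑ X : Finset G, (if ((¬ ((Fintype.card G : ℝ) ^ ((17:ℝ)/20) / 2 < |(X.card : ℝ) - p * Fintype.card G|))
        ∧ ∀ χ : AddChar G ℂ, χ ≠ 0 → ‖∑ g ∈ X, χ g‖ ≤ (Fintype.card G : ℝ) ^ ((17:ℝ)/20))
      then setProb G p X else 0))
      + (∑ X : Finset G, (if ¬ ((¬ ((Fintype.card G : ℝ) ^ ((17:ℝ)/20) / 2 < |(X.card : ℝ) - p * Fintype.card G|))
        ∧ ∀ χ : AddChar G ℂ, χ ≠ 0 → ‖∑ g ∈ X, χ g‖ ≤ (Fintype.card G : ℝ) ^ ((17:ℝ)/20))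
      then setProb G p X else 0)) = 1 := by
    rw [← Finset.sum_add_distrib]
    rw [show (1:ℝ) = ∑ X : Finset G, setProb G p X from (OneRandom.sum_setProb p).symm]
    refine Finset.sum_congr rfl fun X _ => ?_
    by_cases h : ((¬ ((Fintype.card G : ℝ) ^ ((17:ℝ)/20) / 2 < |(X.card : ℝ) - p * Fintype.card G|))
        ∧ ∀ χ : AddChar G ℂ, χ ≠ 0 → ‖∑ g ∈ X, χ g‖ ≤ (Fintype.card G : ℝ) ^ ((17:ℝ)/20))
    · rw [if_pos h, if_neg (not_not_intro h), add_zero]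
    · rw [if_neg h, if_pos h, zero_add]
  have hle1 : (∑ X : Finset G, (if ((¬ ((Fintype.card G : ℝ) ^ ((17:ℝ)/20) / 2 < |(X.card : ℝ) - p * Fintype.card G|))
        ∧ ∀ χ : AddChar G ℂ, χ ≠ 0 → ‖∑ g ∈ X, χ g‖ ≤ (Fintype.card G : ℝ) ^ ((17:ℝ)/20))
      then setProb G p X else 0))
      ≤ ∑ X : Finset G,
        (if (∀ Y : Finset G,
              ((Finset.univ.filter (fun g : G =>
                  ¬ ∀ e₀ e₁ e₂ : ℤ,
                    (e₀ = 1 ∨ e₀ = -1) → (e₁ = 1 ∨ e₁ = -1) → (e₂ = 1 ∨ e₂ = -1) →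
                    |(((X ×ˢ Y).filter
                        (fun q : G × G => e₀ • g + e₁ • q.1 + e₂ • q.2 = 0)).card : ℝ)
                      - p * Y.card|
                      ≤ (Fintype.card G : ℝ) ^ ((9 : ℝ) / 10))).card : ℝ)
                ≤ 8 * (Fintype.card G : ℝ) ^ ((9 : ℝ) / 10))
        then setProb G p X else 0) := by
    refine Finset.sum_le_sum fun X _ => ?_
    by_cases h : ((¬ ((Fintype.card G : ℝ) ^ ((17:ℝ)/20) / 2 < |(X.card : ℝ) - p * Fintype.card G|))
        ∧ ∀ χ : AddChar G ℂ, χ ≠ 0 → ‖∑ g ∈ X, χ g‖ ≤ (Fintype.card G : ℝ) ^ ((17:ℝ)/20))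
    · rw [if_pos h, if_pos (himp X h)]
    · rw [if_neg h]
      split_ifs <;> simp [hwnn]
  linarith [hsum1, hle1, hub2]
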